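/- Define J(X,Y) := ∫₀^W ((X−x)² + Y²)/(2Y) · φ(x) dx for (X,Y) ∈ ℝ × (0,∞) (the expected intercept time when the target and the vehicle have equal speeds). Let X* := ∫₀^W x φ(x) dx and Y* := √(∫₀^W (X*−x)² φ(x) dx). Then Y* > 0 and (X*,Y*) is the unique global minimizer of J over ℝ × (0,∞). -/

import Mathlib

open Real MeasureTheory Filter

/-- When target and vehicle have equal speeds, the expected intercept time
`J(X,Y) = ∫₀^W ((X−x)² + Y²)/(2Y) φ(x) dx` is uniquely minimized over ℝ × (0,∞)
at the centroid `X* = ∫₀^W x φ(x) dx`, `Y* = √(∫₀^W (X*−x)² φ(x) dx)`. -/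
theorem stmt_11 (W M : ℝ) (φ : ℝ → ℝ)
    (hW : 0 < W) (hM : 0 < M) (hφm : Measurable φ)
    (hφ0 : ∀ x, 0 ≤ φ x) (hφM : ∀ x, φ x ≤ M)
    (hφs : ∀ x, x ∉ Set.Icc (0:ℝ) W → φ x = 0)
    (hφ1 : (∫ x in (0:ℝ)..W, φ x) = 1)
    (J : ℝ → ℝ → ℝ)
    (hJ : ∀ X Y : ℝ, J X Y = ∫ x in (0:ℝ)..W, ((X - x) ^ 2 + Y ^ 2) / (2 * Y) * φ x)
    (Xs Ys : ℝ)
    (hXs : Xs = ∫ x in (0:ℝ)..W, x * φ x)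
    (hYs : Ys = Real.sqrt (∫ x in (0:ℝ)..W, (Xs - x) ^ 2 * φ x)) :
    0 < Ys ∧
    (∀ X Y : ℝ, 0 < Y → J Xs Ys ≤ J X Y) ∧
    (∀ X Y : ℝ, 0 < Y → (X, Y) ≠ (Xs, Ys) → J Xs Ys < J X Y) := by
  -- Integrability of `f * φ` for continuous `f`
  have hInt : ∀ f : ℝ → ℝ, Continuous f →
      IntervalIntegrable (fun x => f x * φ x) volume 0 W := by
    intro f hf
    rw [intervalIntegrable_iff_integrableOn_Ioc_of_le hW.le]
    obtain ⟨C, hC⟩ := (isCompact_Icc : IsCompact (Set.Icc (0:ℝ) W)).exists_bound_of_continuousOn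
      hf.continuousOn
    refine MeasureTheory.Integrable.mono' (g := fun _ => C * M)
      (integrableOn_const measure_Ioc_lt_top.ne)
      ((hf.measurable.mul hφm).aestronglyMeasurable) ?_
    refine (ae_restrict_iff' measurableSet_Ioc).2 (ae_of_all _ fun x hx => ?_)
    have hx' : x ∈ Set.Icc (0:ℝ) W := Set.Ioc_subset_Icc_self hx
    have h1 : ‖f x‖ ≤ C := hC x hx'
    have h2 : ‖φ x‖ ≤ M := by
      rw [Real.norm_eq_abs, abs_of_nonneg (hφ0 x)]; exact hφM x
    calc ‖f x * φ x‖ = ‖f x‖ * ‖φ x‖ := norm_mul _ _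
      _ ≤ C * M := mul_le_mul h1 h2 (norm_nonneg _) ((norm_nonneg (f x)).trans h1)
  have hIφ : IntervalIntegrable φ volume 0 W := by
    simpa using hInt (fun _ => 1) continuous_const
  have hIxφ : IntervalIntegrable (fun x => x * φ x) volume 0 W :=
    hInt id continuous_id
  have hIsq : ∀ X : ℝ, IntervalIntegrable (fun x => (X - x) ^ 2 * φ x) volume 0 W := by
    intro X
    exact hInt (fun x => (X - x) ^ 2) (by continuity)
  -- σ² := ∫ (Xs - x)² φ
  set σ2 : ℝ := ∫ x in (0:ℝ)..W, (Xs - x) ^ 2 * φ x with hσ2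
  have hσ2nonneg : 0 ≤ σ2 :=
    intervalIntegral.integral_nonneg hW.le fun x _ => mul_nonneg (sq_nonneg _) (hφ0 x)
  -- σ² > 0
  have hσ2pos : 0 < σ2 := by
    rcases hσ2nonneg.lt_or_eq with h | h
    · exact h
    exfalso
    have h0 : ∫ x in Set.Ioc (0:ℝ) W, (Xs - x) ^ 2 * φ x = 0 := by
      rw [← intervalIntegral.integral_of_le hW.le, ← hσ2, ← h]
    have hint : Integrable (fun x => (Xs - x) ^ 2 * φ x)
        (volume.restrict (Set.Ioc (0:ℝ) W)) :=
      (intervalIntegrable_iff_integrableOn_Ioc_of_le hW.le).1 (hIsq Xs)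
    have hnn : 0 ≤ᵐ[volume.restrict (Set.Ioc (0:ℝ) W)] fun x => (Xs - x) ^ 2 * φ x :=
      ae_of_all _ fun x => mul_nonneg (sq_nonneg _) (hφ0 x)
    have hae : (fun x => (Xs - x) ^ 2 * φ x) =ᵐ[volume.restrict (Set.Ioc (0:ℝ) W)] 0 :=
      (MeasureTheory.integral_eq_zero_iff_of_nonneg_ae hnn hint).1 h0
    have hne : ∀ᵐ x ∂(volume.restrict (Set.Ioc (0:ℝ) W)), x ≠ Xs := by
      refine ae_restrict_of_ae ?_
      have : volume ({Xs} : Set ℝ) = 0 := Real.volume_singleton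
      rw [ae_iff]
      simpa using this
    have hφae : φ =ᵐ[volume.restrict (Set.Ioc (0:ℝ) W)] 0 := by
      filter_upwards [hae, hne] with x hx hxne
      have hsq : (Xs - x) ^ 2 ≠ 0 := pow_ne_zero 2 (sub_ne_zero.2 (Ne.symm hxne))
      have := hx
      simp only [Pi.zero_apply] at this ⊢
      rcases mul_eq_zero.1 this with h' | h'
      · exact absurd h' hsq
      · exact h'
    have : ∫ x in Set.Ioc (0:ℝ) W, φ x = 0 := integral_eq_zero_of_ae hφae
    rw [← intervalIntegral.integral_of_le hW.le] at this
    rw [hφ1] at this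
    exact one_ne_zero this
  have hYspos : 0 < Ys := by rw [hYs]; exact Real.sqrt_pos.2 hσ2pos
  have hYssq : Ys ^ 2 = σ2 := by rw [hYs, sq_sqrt hσ2nonneg]
  -- ∫ (Xs - x) φ = 0
  have hcent : (∫ x in (0:ℝ)..W, (Xs - x) * φ x) = 0 := by
    have : (fun x => (Xs - x) * φ x) = fun x => Xs * φ x - x * φ x := by
      funext x; ring
    rw [this, intervalIntegral.integral_sub ((hIφ.const_mul Xs)) hIxφ,
      intervalIntegral.integral_const_mul, hφ1, ← hXs]
    ring
  -- V X = (X - Xs)² + σ2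
  have hV : ∀ X : ℝ, (∫ x in (0:ℝ)..W, (X - x) ^ 2 * φ x) = (X - Xs) ^ 2 + σ2 := by
    intro X
    have hpt : (fun x => (X - x) ^ 2 * φ x) =
        fun x => (X - Xs) ^ 2 * φ x + ((2 * (X - Xs)) * ((Xs - x) * φ x)
          + (Xs - x) ^ 2 * φ x) := by
      funext x; ring
    have hI1 : IntervalIntegrable (fun x => (Xs - x) * φ x) volume 0 W :=
      hInt (fun x => Xs - x) (by continuity)
    rw [hpt, intervalIntegral.integral_add (hIφ.const_mul _)
        ((hI1.const_mul _).add (hIsq Xs)),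
      intervalIntegral.integral_add (hI1.const_mul _) (hIsq Xs),
      intervalIntegral.integral_const_mul, intervalIntegral.integral_const_mul,
      hφ1, hcent, ← hσ2]
    ring
  -- J formula
  have hJf : ∀ X Y : ℝ, 0 < Y → J X Y = ((X - Xs) ^ 2 + σ2 + Y ^ 2) / (2 * Y) := by
    intro X Y hY
    have hpt : (fun x => ((X - x) ^ 2 + Y ^ 2) / (2 * Y) * φ x) =
        fun x => (1 / (2 * Y)) * ((X - x) ^ 2 * φ x + Y ^ 2 * φ x) := by
      funext x; field_simp
    rw [hJ, hpt, intervalIntegral.integral_const_mul,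
      intervalIntegral.integral_add (hIsq X) (hIφ.const_mul _),
      intervalIntegral.integral_const_mul, hφ1, hV X]
    field_simp
  have hJmin : J Xs Ys = Ys := by
    rw [hJf Xs Ys hYspos, ← hYssq]
    field_simp
    ring
  -- core inequality: J X Y = Ys + ((X-Xs)² + (Y-Ys)²)/(2Y)
  have hdiff : ∀ X Y : ℝ, 0 < Y →
      J X Y = Ys + ((X - Xs) ^ 2 + (Y - Ys) ^ 2) / (2 * Y) := by
    intro X Y hY
    rw [hJf X Y hY, ← hYssq]
    field_simp
    ring
  clear_value σ2
  refine ⟨hYspos, ?_, ?_⟩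
  · intro X Y hY
    rw [hJmin, hdiff X Y hY]
    have : 0 ≤ ((X - Xs) ^ 2 + (Y - Ys) ^ 2) / (2 * Y) := by positivity
    linarith
  · intro X Y hY hne
    rw [hJmin, hdiff X Y hY]
    have hpos : 0 < (X - Xs) ^ 2 + (Y - Ys) ^ 2 := by
      rcases eq_or_ne X Xs with hX | hX
      · have hY' : Y ≠ Ys := by
          intro h; exact hne (by rw [hX, h])
        have : 0 < (Y - Ys) ^ 2 :=
          lt_of_le_of_ne (sq_nonneg _) (Ne.symm (pow_ne_zero 2 (sub_ne_zero.2 hY')))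
        linarith [sq_nonneg (X - Xs)]
      · have : 0 < (X - Xs) ^ 2 :=
          lt_of_le_of_ne (sq_nonneg _) (Ne.symm (pow_ne_zero 2 (sub_ne_zero.2 hX)))
        linarith [sq_nonneg (Y - Ys)]
    have : 0 < ((X - Xs) ^ 2 + (Y - Ys) ^ 2) / (2 * Y) := by positivity
    linarith
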